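/- Let p, θ₁,…,θₙ be polynomials in n variables, and suppose ∑ᵢ (∂p/∂xᵢ)(x) · θᵢ(x) ≥ 0 for all x ∈ ℝⁿ. If φ : [0,r] → ℝⁿ is differentiable with φ'(t) = θ(φ(t)) for all t and p(φ(0)) ≥ 0, then p(φ(t)) ≥ 0 for all t ∈ [0,r]. -/

import Mathlib

open MvPolynomial Set

lemma stmt_5_chain (n : ℕ) (θ : Fin n → MvPolynomial (Fin n) ℝ)
    (r : ℝ) (φ : ℝ → Fin n → ℝ)
    (hφ : ∀ i, ∀ t ∈ Icc (0:ℝ) r,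
      HasDerivWithinAt (fun s => φ s i) (eval (φ t) (θ i)) (Icc (0:ℝ) r) t)
    (p : MvPolynomial (Fin n) ℝ) :
    ∀ t ∈ Icc (0:ℝ) r, HasDerivWithinAt (fun s => eval (φ s) p)
      (∑ i, eval (φ t) (pderiv i p) * eval (φ t) (θ i)) (Icc (0:ℝ) r) t := by
  induction p using MvPolynomial.induction_on with
  | C a =>
    intro t ht
    simp only [eval_C, pderiv_C, map_zero, zero_mul, Finset.sum_const_zero]
    exact hasDerivWithinAt_const t _ a
  | add p q hp hq =>
    intro t ht
    simp only [eval_add, map_add, add_mul, Finset.sum_add_distrib]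
    exact (hp t ht).add (hq t ht)
  | mul_X p i hp =>
    intro t ht
    have h : HasDerivWithinAt (fun s => eval (φ s) p * φ s i) _ (Icc (0:ℝ) r) t :=
      (hp t ht).mul (hφ i t ht)
    simp only [eval_mul, eval_X] at h ⊢
    convert h using 1
    have : ∀ j, eval (φ t) (pderiv j (p * X i)) * eval (φ t) (θ j)
        = eval (φ t) (pderiv j p) * eval (φ t) (θ j) * φ t i
          + (if i = j then eval (φ t) p * eval (φ t) (θ j) else 0) := by
      intro j
      rw [pderiv_mul, pderiv_X]
      by_cases hij : i = j <;> simp [hij, Pi.single_apply] <;> ring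
    rw [Finset.sum_congr rfl fun j _ => this j, Finset.sum_add_distrib,
      Finset.sum_ite_eq (Finset.univ : Finset (Fin n)) i
        (fun j => eval (φ t) p * eval (φ t) (θ j))]
    simp [← Finset.sum_mul]

theorem stmt_5 (n : ℕ) (p : MvPolynomial (Fin n) ℝ) (θ : Fin n → MvPolynomial (Fin n) ℝ)
    (hLie : ∀ x : Fin n → ℝ, 0 ≤ ∑ i, eval x (pderiv i p) * eval x (θ i))
    (r : ℝ) (φ : ℝ → Fin n → ℝ)
    (hφ : ∀ i, ∀ t ∈ Icc (0:ℝ) r,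
      HasDerivWithinAt (fun s => φ s i) (eval (φ t) (θ i)) (Icc (0:ℝ) r) t)
    (h0 : 0 ≤ eval (φ 0) p) :
    ∀ t ∈ Icc (0:ℝ) r, 0 ≤ eval (φ t) p := by
  intro t ht
  have hchain := stmt_5_chain n θ r φ hφ p
  have hmono : MonotoneOn (fun s => eval (φ s) p) (Icc 0 r) := by
    apply monotoneOn_of_hasDerivWithinAt_nonneg (convex_Icc 0 r)
      (f' := fun s => ∑ i, eval (φ s) (pderiv i p) * eval (φ s) (θ i))
    · exact fun s hs => (hchain s hs).continuousWithinAt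
    · intro s hs
      exact ((hchain s (interior_subset hs)).mono interior_subset)
    · exact fun s _ => hLie (φ s)
  calc (0:ℝ) ≤ eval (φ 0) p := h0
    _ ≤ eval (φ t) p := hmono (left_mem_Icc.2 (ht.1.trans ht.2)) ht ht.1
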